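/- Let f(x) = Σ_{i=1}^m log(1+exp(-(Ax)_i)) where all entries of A are bounded by M in absolute value. Then for all x, ỹ ∈ ℝ^n, ỹᵀ ∇²f(x) ỹ ≤ M² · f(x) · ‖ỹ‖₁², i.e., f is M²-multiplicatively smooth with respect to the ℓ₁ norm. -/

import Mathlib

open Real

lemma w_le_log (σ w : ℝ → ℝ) (hσ : ∀ t, σ t = 1 / (1 + exp (-t)))
    (hw : ∀ t, w t = σ t * (1 - σ t)) (t : ℝ) :
    0 ≤ w t ∧ w t ≤ log (1 + exp (-t)) := by
  have hu : (0:ℝ) < exp (-t) := exp_pos _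
  have hd : (0:ℝ) < 1 + exp (-t) := by linarith
  have hσ1 : σ t ≤ 1 := by
    rw [hσ]; rw [div_le_one hd]; linarith
  have hσ0 : 0 < σ t := by
    rw [hσ]; positivity
  have h1σ : 1 - σ t = exp (-t) / (1 + exp (-t)) := by
    rw [hσ]; field_simp; ring
  constructor
  · rw [hw]
    have : 0 ≤ 1 - σ t := by linarith
    positivity
  · rw [hw]
    have hlog : log (1 / (1 + exp (-t))) ≤ 1 / (1 + exp (-t)) - 1 := by
      have := Real.log_le_sub_one_of_pos (x := 1 / (1 + exp (-t))) (by positivity)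
      linarith
    have hlog2 : log (1 + exp (-t)) = - log (1 / (1 + exp (-t))) := by
      rw [Real.log_div one_ne_zero (ne_of_gt hd), Real.log_one]; ring
    have key : 1 - σ t ≤ log (1 + exp (-t)) := by
      rw [hlog2, h1σ, hσ] at *
      have : exp (-t) / (1 + exp (-t)) = 1 - 1 / (1 + exp (-t)) := by field_simp; ring
      linarith
    calc σ t * (1 - σ t) ≤ 1 * (1 - σ t) := by
          apply mul_le_mul_of_nonneg_right hσ1 (by linarith)
      _ = 1 - σ t := one_mul _
      _ ≤ log (1 + exp (-t)) := key

/-- Multiplicative smoothness of the logistic loss w.r.t. the ℓ₁ norm: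
ỹᵀ ∇²f(x) ỹ = Σᵢ w((Ax)ᵢ)(Aỹ)ᵢ² ≤ M² f(x) ‖ỹ‖₁². -/
theorem logistic_multiplicative_smoothness
    {m n : ℕ} (A : Matrix (Fin m) (Fin n) ℝ) (M : ℝ)
    (hA : ∀ i j, |A i j| ≤ M)
    (σ : ℝ → ℝ) (hσ : ∀ t, σ t = 1 / (1 + exp (-t)))
    (w : ℝ → ℝ) (hw : ∀ t, w t = σ t * (1 - σ t))
    (f : (Fin n → ℝ) → ℝ)
    (hf : ∀ x, f x = ∑ i, log (1 + exp (-(A.mulVec x i))))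
    (x y : Fin n → ℝ) :
    ∑ i, w (A.mulVec x i) * (A.mulVec y i) ^ 2 ≤ M ^ 2 * f x * (∑ j, |y j|) ^ 2 := by
  have habs : ∀ i, |A.mulVec y i| ≤ M * ∑ j, |y j| := by
    intro i
    calc |A.mulVec y i| = |∑ j, A i j * y j| := rfl
      _ ≤ ∑ j, |A i j * y j| := Finset.abs_sum_le_sum_abs _ _
      _ ≤ ∑ j, M * |y j| := by
          apply Finset.sum_le_sum
          intro j _
          rw [abs_mul]
          exact mul_le_mul_of_nonneg_right (hA i j) (abs_nonneg _)
      _ = M * ∑ j, |y j| := by rw [Finset.mul_sum]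
  have hsq : ∀ i, (A.mulVec y i) ^ 2 ≤ M ^ 2 * (∑ j, |y j|) ^ 2 := by
    intro i
    rw [← mul_pow]
    rw [← sq_abs (A.mulVec y i)]
    apply pow_le_pow_left₀ (abs_nonneg _) (habs i)
  have key : ∀ i, w (A.mulVec x i) * (A.mulVec y i) ^ 2 ≤
      log (1 + exp (-(A.mulVec x i))) * (M ^ 2 * (∑ j, |y j|) ^ 2) := by
    intro i
    obtain ⟨h0, h1⟩ := w_le_log σ w hσ hw (A.mulVec x i)
    have hlog0 : 0 ≤ log (1 + exp (-(A.mulVec x i))) := by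
      apply Real.log_nonneg
      have := exp_pos (-(A.mulVec x i))
      linarith
    exact mul_le_mul h1 (hsq i) (sq_nonneg _) hlog0
  calc ∑ i, w (A.mulVec x i) * (A.mulVec y i) ^ 2
      ≤ ∑ i, log (1 + exp (-(A.mulVec x i))) * (M ^ 2 * (∑ j, |y j|) ^ 2) :=
        Finset.sum_le_sum (fun i _ => key i)
    _ = (∑ i, log (1 + exp (-(A.mulVec x i)))) * (M ^ 2 * (∑ j, |y j|) ^ 2) := by
        rw [← Finset.sum_mul]
    _ = M ^ 2 * f x * (∑ j, |y j|) ^ 2 := by rw [hf]; ring
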